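/- (Theorem 2, first inequality.) If x* minimizes f_ν over M, then for every x ∈ M one has d(x*, x) ≤ N^{−1/ν} · 2 f_ν(x). -/
import Mathlib

open Finset

theorem dist_to_barycenter_upper {M : Type*} [MetricSpace M] {N : ℕ} (hN : 1 ≤ N)
    (x : Fin N → M) {ν : ℝ} (hν : 1 ≤ ν)
    (f : M → ℝ)
    (hf : ∀ y : M, f y = (∑ i, dist y (x i) ^ ν) ^ (1 / ν))
    (xstar : M) (hxstar : ∀ z : M, f xstar ≤ f z)
    (y : M) :
    dist xstar y ≤ (N : ℝ) ^ (-(1 / ν)) * (2 * f y) := by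
  have hν0 : 0 < ν := lt_of_lt_of_le one_pos hν
  have hNpos : (0:ℝ) < (N : ℝ) := by exact_mod_cast hN
  have hNrpos : (0:ℝ) < (N : ℝ) ^ (1 / ν) := Real.rpow_pos_of_pos hNpos _
  -- key chain
  have key : (N : ℝ) ^ (1 / ν) * dist xstar y ≤ 2 * f y := by
    have h1 : (N : ℝ) ^ (1 / ν) * dist xstar y
        = (∑ i : Fin N, dist xstar y ^ ν) ^ (1 / ν) := by
      rw [Finset.sum_const, Finset.card_univ, Fintype.card_fin, nsmul_eq_mul,
        Real.mul_rpow (by positivity) (Real.rpow_nonneg dist_nonneg _)]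
      congr 1
      rw [← Real.rpow_mul dist_nonneg, mul_one_div_cancel (ne_of_gt hν0), Real.rpow_one]
    have h2 : (∑ i : Fin N, dist xstar y ^ ν) ^ (1 / ν)
        ≤ (∑ i : Fin N, (dist xstar (x i) + dist y (x i)) ^ ν) ^ (1 / ν) := by
      apply Real.rpow_le_rpow (Finset.sum_nonneg fun i _ => Real.rpow_nonneg dist_nonneg _)
        _ (by positivity)
      apply Finset.sum_le_sum
      intro i _
      exact Real.rpow_le_rpow dist_nonneg (dist_triangle_right _ _ _) (le_of_lt hν0)
    have h3 : (∑ i : Fin N, (dist xstar (x i) + dist y (x i)) ^ ν) ^ (1 / ν)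
        ≤ (∑ i : Fin N, dist xstar (x i) ^ ν) ^ (1 / ν)
          + (∑ i : Fin N, dist y (x i) ^ ν) ^ (1 / ν) :=
      Real.Lp_add_le_of_nonneg (s := univ) hν (fun i _ => dist_nonneg) (fun i _ => dist_nonneg)
    have h4 : f xstar ≤ f y := hxstar y
    rw [hf xstar, hf y] at h4
    calc (N : ℝ) ^ (1 / ν) * dist xstar y
        = (∑ i : Fin N, dist xstar y ^ ν) ^ (1 / ν) := h1
      _ ≤ (∑ i : Fin N, (dist xstar (x i) + dist y (x i)) ^ ν) ^ (1 / ν) := h2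
      _ ≤ (∑ i : Fin N, dist xstar (x i) ^ ν) ^ (1 / ν)
          + (∑ i : Fin N, dist y (x i) ^ ν) ^ (1 / ν) := h3
      _ ≤ 2 * f y := by rw [hf y]; linarith
  rw [Real.rpow_neg (Nat.cast_nonneg N), ← div_eq_inv_mul, le_div_iff₀ hNrpos]
  linarith [key, mul_comm ((N : ℝ) ^ (1 / ν)) (dist xstar y)]
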